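/- Let X be a type, S : Set X a feasible set, f₁ f₂ : X → ℝ two objective functions, and L₁ < U₁, L₂ < U₂ real numbers. Define the aggregate membership value μ(x) = min ((U₁ - f₁ x) / (U₁ - L₁)) ((U₂ - f₂ x) / (U₂ - L₂)). If x* ∈ S maximizes μ over S (i.e., μ(x) ≤ μ(x*) for all x ∈ S), then x* is weakly Pareto optimal for the bi-objective minimization problem: there is no x ∈ S with f₁ x < f₁ x* and f₂ x < f₂ x*. -/
import Mathlib


/-- A maximizer of the aggregate fuzzy membership value
`μ x = min ((U₁ - f₁ x)/(U₁ - L₁)) ((U₂ - f₂ x)/(U₂ - L₂))` over the feasible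
set `S` is weakly Pareto optimal for the bi-objective minimization problem. -/
theorem fuzzy_max_weak_pareto {X : Type*} (S : Set X) (f₁ f₂ : X → ℝ)
    (L₁ U₁ L₂ U₂ : ℝ) (h₁ : L₁ < U₁) (h₂ : L₂ < U₂)
    (μ : X → ℝ)
    (hμ : ∀ x, μ x = min ((U₁ - f₁ x) / (U₁ - L₁)) ((U₂ - f₂ x) / (U₂ - L₂)))
    (xs : X) (hxs : xs ∈ S) (hmax : ∀ x ∈ S, μ x ≤ μ xs) :
    ¬ ∃ x ∈ S, f₁ x < f₁ xs ∧ f₂ x < f₂ xs := by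
  rintro ⟨x, hxS, hf1, hf2⟩
  have d₁ : (0:ℝ) < U₁ - L₁ := by linarith
  have d₂ : (0:ℝ) < U₂ - L₂ := by linarith
  have k1 : (U₁ - f₁ xs) / (U₁ - L₁) < (U₁ - f₁ x) / (U₁ - L₁) :=
    (div_lt_div_iff_of_pos_right d₁).mpr (by linarith)
  have k2 : (U₂ - f₂ xs) / (U₂ - L₂) < (U₂ - f₂ x) / (U₂ - L₂) :=
    (div_lt_div_iff_of_pos_right d₂).mpr (by linarith)
  have hlt : μ xs < μ x := by
    rw [hμ, hμ]
    exact lt_min (lt_of_le_of_lt (min_le_left _ _) k1)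
      (lt_of_le_of_lt (min_le_right _ _) k2)
  exact absurd (hmax x hxS) (not_le.mpr hlt)
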